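/- For every n ≥ 0 there exists a UFA with n states (over some finite alphabet) such that both its forward determinization and its backward determinization have at least (1/2) · √(n+1) · 2^(n/2) states. -/

import Mathlib

/-- A nondeterministic finite automaton with state type `Q` and alphabet `A`:
transition relation `δ`, initial states `I`, accepting states `F`. -/
structure NFA' (Q A : Type) where
  δ : Q → A → Q → Prop
  I : Set Q
  F : Set Q

namespace NFA'

variable {Q A : Type}

/-- `M.Steps q w q'` holds iff there is a run from `q` to `q'` reading the word `w`. -/
def Steps (M : NFA' Q A) : Q → List A → Q → Prop
  | q, [], q' => q = q'
  | q, a :: w, q' => ∃ p, M.δ q a p ∧ M.Steps p w q'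

/-- An accepting run for the word `w`, given as the sequence of visited states. -/
def IsAccRun (M : NFA' Q A) (w : List A) (r : Fin (w.length + 1) → Q) : Prop :=
  r 0 ∈ M.I ∧ r (Fin.last w.length) ∈ M.F ∧
    ∀ i : Fin w.length, M.δ (r i.castSucc) (w.get i) (r i.succ)

/-- The language recognized by `M`: words with at least one accepting run. -/
def Lang (M : NFA' Q A) : Set (List A) :=
  {w | ∃ r, M.IsAccRun w r}

/-- `M` is unambiguous (a UFA) if every word has at most one accepting run. -/
def Unambiguous (M : NFA' Q A) : Prop :=
  ∀ (w : List A) (r r' : Fin (w.length + 1) → Q),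
    M.IsAccRun w r → M.IsAccRun w r' → r = r'

/-- The state set `{δ(I,w) | w ∈ Σ*}` of the forward determinization of `M`. -/
def fwdStates (M : NFA' Q A) : Set (Set Q) :=
  {S | ∃ w : List A, S = {r | ∃ q ∈ M.I, M.Steps q w r}}

/-- The state set `{δ⁻¹(w,F) | w ∈ Σ*}` of the backward determinization of `M`. -/
def bwdStates (M : NFA' Q A) : Set (Set Q) :=
  {S | ∃ w : List A, S = {r | ∃ q ∈ M.F, M.Steps r w q}}

end NFA'

namespace UFAConstr

/-! ## The construction

For parameters `k ≤ n`, we build a UFA on the state set `Fin n`.  Let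
`X = {q | q.val < k}` and let `x₀` be the state `0`.  The alphabet consists of
letters `inl S` (for `S : Finset (Fin n)`), going from `x₀` to every state of
`S ∩ X`, and letters `inr T`, going from every state of `T` to `x₀`, but only
when `T` contains at most one state of `X` (otherwise `inr T` has no
transitions).  Initial and final state sets are both `{x₀}`.

Every transition starts or ends in `x₀`, and every set `δ⁻¹(w, F)` contains at
most one state of `X` while every set `δ(I, w)` is contained in `X`; this makes
the automaton unambiguous.  The forward determinization reaches all `2 ^ k`
subsets of `X`, and the backward determinization reaches all
`(k + 1) * 2 ^ (n - k)` sets containing at most one state of `X`.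
Choosing `k` appropriately makes both at least `(1/2)·√(n+1)·2^(n/2)`. -/

/-- The transition relation described above. -/
def myδ (n k : ℕ) (q : Fin n) (a : Finset (Fin n) ⊕ Finset (Fin n)) (q' : Fin n) : Prop :=
  match a with
  | .inl S => q.val = 0 ∧ q' ∈ S ∧ q'.val < k
  | .inr T => q ∈ T ∧ q'.val = 0 ∧ ∀ p ∈ T, ∀ p' ∈ T, p.val < k → p'.val < k → p = p'

/-- The UFA witnessing the lower bound. -/
def myM (n k : ℕ) : NFA' (Fin n) (Finset (Fin n) ⊕ Finset (Fin n)) where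
  δ := myδ n k
  I := {q | q.val = 0}
  F := {q | q.val = 0}

variable {n k : ℕ}

lemma run_lt (hk : 1 ≤ k) {w : List (Finset (Fin n) ⊕ Finset (Fin n))}
    {r : Fin (w.length + 1) → Fin n} (h : (myM n k).IsAccRun w r) :
    ∀ i : Fin (w.length + 1), (r i).val < k := by
  rintro ⟨iv, hiv⟩
  induction iv with
  | zero =>
    have h0 := h.1
    simp only [myM, Set.mem_setOf_eq] at h0
    have : (⟨0, hiv⟩ : Fin (w.length + 1)) = 0 := rfl
    rw [this]
    omega
  | succ m ih =>
    have hm : m < w.length := by omega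
    have ht := h.2.2 ⟨m, hm⟩
    have hc : (⟨m, hm⟩ : Fin w.length).succ = ⟨m + 1, hiv⟩ := rfl
    rw [hc] at ht
    rcases hg : w.get ⟨m, hm⟩ with S | T <;> rw [hg] at ht <;>
      simp only [myM, myδ] at ht <;> omega

lemma myM_unamb (hk : 1 ≤ k) : (myM n k).Unambiguous := by
  intro w r r' hr hr'
  funext i
  rcases i with ⟨iv, hiv⟩
  by_cases hi : iv < w.length
  · have ht := hr.2.2 ⟨iv, hi⟩
    have ht' := hr'.2.2 ⟨iv, hi⟩
    have hc : (⟨iv, hi⟩ : Fin w.length).castSucc = ⟨iv, hiv⟩ := rfl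
    rw [hc] at ht ht'
    rcases hg : w.get ⟨iv, hi⟩ with S | T <;> rw [hg] at ht ht' <;>
      simp only [myM, myδ] at ht ht'
    · exact Fin.ext (by omega)
    · exact ht.2.2 _ ht.1 _ ht'.1 (run_lt hk hr _) (run_lt hk hr' _)
  · have hlast : (⟨iv, hiv⟩ : Fin (w.length + 1)) = Fin.last w.length := Fin.ext (by simp; omega)
    rw [hlast]
    have h1 := hr.2.1
    have h2 := hr'.2.1
    simp only [myM, Set.mem_setOf_eq] at h1 h2
    exact Fin.ext (by omega)

lemma fwd_mem (hn : 0 < n) (S : Finset (Fin n)) (hS : ∀ q ∈ S, q.val < k) :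
    (↑S : Set (Fin n)) ∈ (myM n k).fwdStates := by
  refine ⟨[.inl S], ?_⟩
  ext r
  simp only [NFA'.Steps, myM, myδ, Set.mem_setOf_eq, Finset.coe_sort_coe, Finset.mem_coe]
  constructor
  · intro hr
    exact ⟨⟨0, hn⟩, rfl, r, ⟨rfl, hr, hS r hr⟩, rfl⟩
  · rintro ⟨q, hq, p, ⟨_, hp, _⟩, rfl⟩
    exact hp

lemma bwd_mem (hn : 0 < n) (T : Finset (Fin n))
    (hT : ∀ p ∈ T, ∀ p' ∈ T, p.val < k → p'.val < k → p = p') :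
    (↑T : Set (Fin n)) ∈ (myM n k).bwdStates := by
  refine ⟨[.inr T], ?_⟩
  ext r
  simp only [NFA'.Steps, myM, myδ, Set.mem_setOf_eq, Finset.mem_coe]
  constructor
  · intro hr
    exact ⟨⟨0, hn⟩, rfl, ⟨0, hn⟩, ⟨hr, rfl, hT⟩, rfl⟩
  · rintro ⟨q, hq, p, ⟨hp, _, _⟩, rfl⟩
    exact hp

/-! ### Counting the forward and backward states -/

/-- The embedding of `Fin k` into `Fin n`. -/
def e (hkn : k ≤ n) : Fin k ↪ Fin n :=
  ⟨Fin.castLE hkn, Fin.castLE_injective hkn⟩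

@[simp] lemma e_val (hkn : k ≤ n) (i : Fin k) : (e hkn i).val = i.val := rfl

/-- The embedding of `Fin (n - k)` into `Fin n` shifting by `k`. -/
def e2 (hkn : k ≤ n) : Fin (n - k) ↪ Fin n :=
  ⟨fun j => ⟨k + j.val, by omega⟩, by
    intro a b hab
    have h2 : k + a.val = k + b.val := by
      simpa using congrArg Fin.val hab
    exact Fin.ext (by omega)⟩

@[simp] lemma e2_val (hkn : k ≤ n) (j : Fin (n - k)) : (e2 hkn j).val = k + j.val := rfl

/-- The sets with at most one element of value `< k`, parametrized injectively. -/
def Ψ (hkn : k ≤ n) (ob : Option (Fin k) × Finset (Fin (n - k))) : Finset (Fin n) :=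
  (ob.1.elim ∅ fun i => {e hkn i}) ∪ ob.2.map (e2 hkn)

lemma mem_Ψ_e (hkn : k ≤ n) (ob : Option (Fin k) × Finset (Fin (n - k))) (x : Fin k) :
    e hkn x ∈ Ψ hkn ob ↔ ob.1 = some x := by
  rcases ob with ⟨o, B⟩
  simp only [Ψ, Finset.mem_union, Finset.mem_map]
  constructor
  · rintro (h | ⟨j, hj, hje⟩)
    · cases o with
      | none => simp at h
      | some i =>
        simp only [Option.elim, Finset.mem_singleton] at h
        have hv : (e hkn i).val = (e hkn x).val := by rw [h]
        simp only [e_val] at hv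
        exact congrArg some (Fin.ext hv)
    · exfalso
      have hv : (e2 hkn j).val = (e hkn x).val := by rw [hje]
      simp only [e_val, e2_val] at hv
      omega
  · rintro rfl
    left
    simp [Option.elim]

lemma mem_Ψ_e2 (hkn : k ≤ n) (ob : Option (Fin k) × Finset (Fin (n - k))) (y : Fin (n - k)) :
    e2 hkn y ∈ Ψ hkn ob ↔ y ∈ ob.2 := by
  rcases ob with ⟨o, B⟩
  simp only [Ψ, Finset.mem_union, Finset.mem_map]
  constructor
  · rintro (h | ⟨j, hj, hje⟩)
    · exfalso
      cases o with
      | none => simp at h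
      | some i =>
        simp only [Option.elim, Finset.mem_singleton] at h
        have hv : (e2 hkn y).val = (e hkn i).val := by rw [h]
        simp only [e_val, e2_val] at hv
        omega
    · rwa [(e2 hkn).injective hje] at hj
  · intro h
    exact Or.inr ⟨y, h, rfl⟩

lemma Ψ_inj (hkn : k ≤ n) : Function.Injective (Ψ hkn) := by
  rintro ⟨o, B⟩ ⟨o', B'⟩ h
  have ho : o = o' := by
    cases o with
    | none =>
      cases o' with
      | none => rfl
      | some i' =>
        have h1 := (mem_Ψ_e hkn (some i', B') i').mpr rfl
        rw [← h] at h1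
        have h2 := (mem_Ψ_e hkn (Option.none, B) i').mp h1
        simp at h2
    | some i =>
      have h1 := (mem_Ψ_e hkn (some i, B) i).mpr rfl
      rw [h] at h1
      exact ((mem_Ψ_e hkn (o', B') i).mp h1).symm
  have hB : B = B' := by
    ext y
    rw [← mem_Ψ_e2 hkn (o, B) y, ← mem_Ψ_e2 hkn (o', B') y, h]
  rw [ho, hB]

lemma Ψ_constraint (hkn : k ≤ n) (ob : Option (Fin k) × Finset (Fin (n - k))) :
    ∀ p ∈ Ψ hkn ob, ∀ p' ∈ Ψ hkn ob, p.val < k → p'.val < k → p = p' := by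
  rintro p hp p' hp' hpk hp'k
  rcases ob with ⟨o, B⟩
  simp only [Ψ, Finset.mem_union, Finset.mem_map] at hp hp'
  have hpo : p ∈ (o.elim ∅ fun i => ({e hkn i} : Finset (Fin n))) := by
    rcases hp with h | ⟨j, _, hje⟩
    · exact h
    · exfalso
      have hv : (e2 hkn j).val = p.val := by rw [hje]
      simp only [e2_val] at hv
      omega
  have hp'o : p' ∈ (o.elim ∅ fun i => ({e hkn i} : Finset (Fin n))) := by
    rcases hp' with h | ⟨j, _, hje⟩
    · exact h
    · exfalso
      have hv : (e2 hkn j).val = p'.val := by rw [hje]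
      simp only [e2_val] at hv
      omega
  cases o with
  | none => simp at hpo
  | some i =>
    simp only [Option.elim, Finset.mem_singleton] at hpo hp'o
    rw [hpo, hp'o]

lemma fwd_card (hn : 0 < n) (hkn : k ≤ n) :
    2 ^ k ≤ (myM n k).fwdStates.ncard := by
  set Φ : Finset (Fin k) → Set (Fin n) := fun F => ↑(F.map (e hkn)) with hΦ
  have hinj : Function.Injective Φ := by
    intro a b hab
    exact Finset.map_injective (e hkn) (Finset.coe_injective hab)
  have hrange : Set.range Φ ⊆ (myM n k).fwdStates := by
    rintro _ ⟨F, rfl⟩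
    refine fwd_mem hn _ ?_
    intro q hq
    rcases Finset.mem_map.mp hq with ⟨i, _, rfl⟩
    simp only [e_val]
    exact i.isLt
  calc 2 ^ k = Nat.card (Finset (Fin k)) := by simp [Nat.card_eq_fintype_card]
    _ = (Set.univ : Set (Finset (Fin k))).ncard := (Set.ncard_univ _).symm
    _ = (Φ '' Set.univ).ncard := (Set.ncard_image_of_injective _ hinj).symm
    _ = (Set.range Φ).ncard := by rw [Set.image_univ]
    _ ≤ _ := Set.ncard_le_ncard hrange (Set.toFinite _)

lemma bwd_card (hn : 0 < n) (hkn : k ≤ n) :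
    (k + 1) * 2 ^ (n - k) ≤ (myM n k).bwdStates.ncard := by
  set Φ : Option (Fin k) × Finset (Fin (n - k)) → Set (Fin n) :=
    fun ob => ↑(Ψ hkn ob) with hΦ
  have hinj : Function.Injective Φ := by
    intro a b hab
    exact Ψ_inj hkn (Finset.coe_injective hab)
  have hrange : Set.range Φ ⊆ (myM n k).bwdStates := by
    rintro _ ⟨ob, rfl⟩
    exact bwd_mem hn _ (Ψ_constraint hkn ob)
  calc (k + 1) * 2 ^ (n - k)
      = Nat.card (Option (Fin k) × Finset (Fin (n - k))) := by
        simp [Nat.card_eq_fintype_card]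
    _ = (Set.univ : Set (Option (Fin k) × Finset (Fin (n - k)))).ncard := (Set.ncard_univ _).symm
    _ = (Φ '' Set.univ).ncard := (Set.ncard_image_of_injective _ hinj).symm
    _ = (Set.range Φ).ncard := by rw [Set.image_univ]
    _ ≤ _ := Set.ncard_le_ncard hrange (Set.toFinite _)

/-! ### Choice of the parameter `k` and numeric estimates -/

/-- Abbreviation for the claimed lower bound. -/
noncomputable def B (n : ℕ) : ℝ := (1 / 2 : ℝ) * Real.sqrt (n + 1) * 2 ^ ((n : ℝ) / 2)

lemma B_pos (n : ℕ) : 0 < B n := by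
  unfold B
  have h1 : (0:ℝ) < Real.sqrt (n + 1) := Real.sqrt_pos.mpr (by positivity)
  positivity

lemma le_of_sq_le_sq {a b : ℝ} (h : a ^ 2 ≤ b ^ 2) (hb : 0 ≤ b) : a ≤ b := by
  have h2 := Real.sqrt_le_sqrt h
  rw [Real.sqrt_sq_eq_abs, Real.sqrt_sq_eq_abs, abs_of_nonneg hb] at h2
  exact le_trans (le_abs_self a) h2

lemma B_sq (n : ℕ) : B n ^ 2 = ((n : ℝ) + 1) * 2 ^ n / 4 := by
  unfold B
  have h1 : (Real.sqrt ((n:ℝ) + 1)) ^ 2 = (n : ℝ) + 1 := Real.sq_sqrt (by positivity)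
  have h2 : ((2:ℝ) ^ ((n : ℝ) / 2)) ^ 2 = (2:ℝ) ^ (n : ℕ) := by
    rw [← Real.rpow_natCast ((2:ℝ) ^ ((n : ℝ) / 2)) 2, ← Real.rpow_mul (by norm_num : (0:ℝ) ≤ 2),
      ← Real.rpow_natCast 2 n]
    congr 1
    push_cast
    ring
  push_cast at h1 ⊢
  rw [mul_pow, mul_pow, h1, h2]
  ring

lemma one_le_two_pow_real (n : ℕ) : (1:ℝ) ≤ 2 ^ n := by
  exact_mod_cast Nat.one_le_two_pow (n := n)

lemma B_le_two_pow (n : ℕ) : B n ≤ (2:ℝ) ^ n := by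
  apply le_of_sq_le_sq _ (by positivity)
  rw [B_sq]
  have h1 : (n : ℝ) < (2:ℝ) ^ n := by exact_mod_cast (Nat.lt_two_pow_self : n < 2 ^ n)
  nlinarith [one_le_two_pow_real n]

lemma exists_pow_ge (n : ℕ) : ∃ j : ℕ, B n ≤ (2:ℝ) ^ j := ⟨n, B_le_two_pow n⟩

/-- The chosen parameter: the least `k` with `B n ≤ 2 ^ k` (at least `1`). -/
noncomputable def kk (n : ℕ) : ℕ := max (Nat.find (exists_pow_ge n)) 1

lemma kk_pos (n : ℕ) : 1 ≤ kk n := le_max_right _ _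

lemma kk_le (n : ℕ) (hn : 1 ≤ n) : kk n ≤ n :=
  max_le (Nat.find_min' _ (B_le_two_pow n)) hn

lemma B_le_pow_kk (n : ℕ) : B n ≤ (2:ℝ) ^ kk n := by
  refine le_trans (Nat.find_spec (exists_pow_ge n)) ?_
  exact pow_le_pow_right₀ one_le_two (le_max_left _ _)

lemma n_le_two_kk (n : ℕ) (hn : 1 ≤ n) : n ≤ 2 * kk n + 1 := by
  have h1 : B n ^ 2 ≤ ((2:ℝ) ^ kk n) ^ 2 := by
    have := B_le_pow_kk n
    have hB := (B_pos n).le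
    nlinarith
  rw [B_sq] at h1
  have hn2 : (2:ℝ) ^ (n - 1) * 2 = (2:ℝ) ^ n := by
    rw [← pow_succ]
    congr 1
    omega
  have hcast : (2:ℝ) ≤ (n:ℝ) + 1 := by
    have : (1:ℝ) ≤ (n:ℝ) := by exact_mod_cast hn
    linarith
  have h25 : 2 * (2:ℝ) ^ n ≤ ((n:ℝ) + 1) * 2 ^ n :=
    mul_le_mul_of_nonneg_right hcast (by positivity)
  have h3 : ((2:ℝ) ^ kk n) ^ 2 = (2:ℝ) ^ (2 * kk n) := by
    rw [← pow_mul]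
    ring_nf
  have h2 : (2:ℝ) ^ (n - 1) ≤ (2:ℝ) ^ (2 * kk n) := by
    rw [← h3]
    linarith
  have h4 : (2:ℕ) ^ (n - 1) ≤ 2 ^ (2 * kk n) := by exact_mod_cast h2
  have h5 : n - 1 ≤ 2 * kk n := (Nat.pow_le_pow_iff_right (by norm_num)).mp h4
  omega

lemma B_le_bwd_count (n : ℕ) (hn : 1 ≤ n) :
    B n ≤ (((kk n + 1) * 2 ^ (n - kk n) : ℕ) : ℝ) := by
  by_cases hf : Nat.find (exists_pow_ge n) = 0
  · have hB1 : B n ≤ 1 := by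
      have := Nat.find_spec (exists_pow_ge n)
      rwa [hf, pow_zero] at this
    have h1 : (1 : ℕ) ≤ (kk n + 1) * 2 ^ (n - kk n) := Nat.one_le_iff_ne_zero.mpr (by positivity)
    calc B n ≤ 1 := hB1
      _ ≤ _ := by exact_mod_cast h1
  · have hf1 : 1 ≤ Nat.find (exists_pow_ge n) := Nat.one_le_iff_ne_zero.mpr hf
    have hkk : kk n = Nat.find (exists_pow_ge n) := max_eq_left hf1
    have hmin : ¬ B n ≤ (2:ℝ) ^ (Nat.find (exists_pow_ge n) - 1) :=
      Nat.find_min (exists_pow_ge n) (by omega)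
    push_neg at hmin
    have hx : (2:ℝ) ^ kk n < 2 * B n := by
      have hps : (2:ℝ) ^ (Nat.find (exists_pow_ge n) - 1) * 2 = (2:ℝ) ^ kk n := by
        rw [← pow_succ]
        congr 1
        omega
      nlinarith
    have hkn : kk n ≤ n := kk_le n hn
    have hxy : (2:ℝ) ^ kk n * (2:ℝ) ^ (n - kk n) = (2:ℝ) ^ n := by
      rw [← pow_add]
      congr 1
      omega
    have hnat : n + 1 ≤ 2 * (kk n + 1) := by
      have := n_le_two_kk n hn
      omega
    have hsum : (n : ℝ) + 1 ≤ 2 * ((kk n : ℝ) + 1) := by exact_mod_cast hnat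
    have hy : (0:ℝ) < (2:ℝ) ^ (n - kk n) := by positivity
    have hBsq := B_sq n
    have hB := B_pos n
    have hk1 : (0:ℝ) < (kk n : ℝ) + 1 := by positivity
    have e1 : 4 * B n ^ 2 = ((n:ℝ) + 1) * ((2:ℝ) ^ kk n * (2:ℝ) ^ (n - kk n)) := by
      rw [hBsq, hxy]; ring
    have e2 : ((n:ℝ) + 1) * ((2:ℝ) ^ kk n * (2:ℝ) ^ (n - kk n)) ≤
        2 * ((kk n : ℝ) + 1) * ((2:ℝ) ^ kk n * (2:ℝ) ^ (n - kk n)) :=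
      mul_le_mul_of_nonneg_right hsum (by positivity)
    have e3 : 2 * ((kk n : ℝ) + 1) * ((2:ℝ) ^ kk n * (2:ℝ) ^ (n - kk n)) <
        2 * ((kk n : ℝ) + 1) * ((2 * B n) * (2:ℝ) ^ (n - kk n)) := by
      gcongr
    have e4 : 4 * B n ^ 2 < 4 * B n * (((kk n : ℝ) + 1) * (2:ℝ) ^ (n - kk n)) := by
      nlinarith
    have goal : B n ≤ ((kk n : ℝ) + 1) * (2:ℝ) ^ (n - kk n) := by
      nlinarith
    calc B n ≤ ((kk n : ℝ) + 1) * (2:ℝ) ^ (n - kk n) := goal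
      _ = _ := by push_cast; ring

end UFAConstr

/-- For every `n ≥ 0` there exists a UFA with `n` states (over some finite
alphabet) whose forward and backward determinizations both have at least
`(1/2) · √(n+1) · 2^(n/2)` states. -/
theorem exists_ufa_large_determinizations (n : ℕ) :
    ∃ (Q A : Type) (iQ : Fintype Q) (_ : Fintype A) (M : NFA' Q A),
      @Fintype.card Q iQ = n ∧ M.Unambiguous ∧
      (1 / 2 : ℝ) * Real.sqrt (n + 1) * 2 ^ ((n : ℝ) / 2) ≤ (M.fwdStates.ncard : ℝ) ∧
      (1 / 2 : ℝ) * Real.sqrt (n + 1) * 2 ^ ((n : ℝ) / 2) ≤ (M.bwdStates.ncard : ℝ) := by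
  rcases Nat.eq_zero_or_pos n with rfl | hn
  · refine ⟨Fin 0, Unit, Fin.fintype 0, inferInstance,
      ⟨fun _ _ _ => False, ∅, ∅⟩, by simp, ?_, ?_, ?_⟩
    · intro w r r' hr hr'
      funext i
      exact (r i).elim0
    · calc (1 / 2 : ℝ) * Real.sqrt ((0:ℕ) + 1) * 2 ^ (((0:ℕ) : ℝ) / 2)
          = 1 / 2 := by norm_num
        _ ≤ 1 := by norm_num
        _ ≤ _ := by
            have hpos : 0 < (NFA'.fwdStates
                (⟨fun _ _ _ => False, ∅, ∅⟩ : NFA' (Fin 0) Unit)).ncard :=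
              (Set.ncard_pos (Set.toFinite _)).mpr ⟨_, [], rfl⟩
            exact_mod_cast hpos
    · calc (1 / 2 : ℝ) * Real.sqrt ((0:ℕ) + 1) * 2 ^ (((0:ℕ) : ℝ) / 2)
          = 1 / 2 := by norm_num
        _ ≤ 1 := by norm_num
        _ ≤ _ := by
            have hpos : 0 < (NFA'.bwdStates
                (⟨fun _ _ _ => False, ∅, ∅⟩ : NFA' (Fin 0) Unit)).ncard :=
              (Set.ncard_pos (Set.toFinite _)).mpr ⟨_, [], rfl⟩
            exact_mod_cast hpos
  · refine ⟨Fin n, Finset (Fin n) ⊕ Finset (Fin n), Fin.fintype n, inferInstance,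
      UFAConstr.myM n (UFAConstr.kk n), by simp, UFAConstr.myM_unamb (UFAConstr.kk_pos n), ?_, ?_⟩
    · calc (1 / 2 : ℝ) * Real.sqrt (n + 1) * 2 ^ ((n : ℝ) / 2)
          = UFAConstr.B n := rfl
        _ ≤ (2:ℝ) ^ UFAConstr.kk n := UFAConstr.B_le_pow_kk n
        _ = ((2 ^ UFAConstr.kk n : ℕ) : ℝ) := by push_cast; ring
        _ ≤ _ := by
            exact_mod_cast UFAConstr.fwd_card hn (UFAConstr.kk_le n hn)
    · calc (1 / 2 : ℝ) * Real.sqrt (n + 1) * 2 ^ ((n : ℝ) / 2)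
          = UFAConstr.B n := rfl
        _ ≤ (((UFAConstr.kk n + 1) * 2 ^ (n - UFAConstr.kk n) : ℕ) : ℝ) :=
            UFAConstr.B_le_bwd_count n hn
        _ ≤ _ := by
            exact_mod_cast UFAConstr.bwd_card hn (UFAConstr.kk_le n hn)
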